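/- Under the Distflow model, the terminal squared voltage satisfies W_{N,N} ≥ 1 + r·(p_0 + ⋯ + p_{N−1}). Consequently, if W_{N,N} ≤ (1/(1−Δ))² for some 0 < Δ ≤ 1/2, then p_0 + ⋯ + p_{N−1} ≤ (1/r)·((1/(1−Δ))² − 1) (for r > 0), so the feasible set of power allocations is bounded. -/

import Mathlib

open Finset in
/-- Under the Distflow model the terminal squared voltage satisfies
`V_N² ≥ 1 + r (p_0 + ⋯ + p_{N-1})`; hence the voltage-drop constraint
`V_N² ≤ (1/(1-Δ))²` bounds the total power allocation. -/
theorem distflow_total_power_bound (N : ℕ) (hN : 1 ≤ N)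
    (r : ℝ) (hr : 0 < r) (p : ℕ → ℝ) (hp : ∀ j, 0 ≤ p j)
    (V : ℕ → ℝ)
    (hV0 : V 0 = 1) (hV1 : V 1 = 1 + r * p 0)
    (hrec : ∀ j, 1 ≤ j → j ≤ N - 1 → V (j + 1) = 2 * V j - V (j - 1) + r * p j / V j) :
    V N ^ 2 ≥ 1 + r * ∑ i ∈ range N, p i ∧
    ∀ Δ : ℝ, 0 < Δ → Δ ≤ 1 / 2 → V N ^ 2 ≤ (1 / (1 - Δ)) ^ 2 →
      ∑ i ∈ range N, p i ≤ (1 / r) * ((1 / (1 - Δ)) ^ 2 - 1) := by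
  have key : ∀ j : ℕ, 1 ≤ j → j ≤ N →
      1 ≤ V (j - 1) ∧ V (j - 1) ≤ V j ∧
      r * ∑ i ∈ range j, p i ≤ V j * (V j - V (j - 1)) := by
    intro j h1
    induction j, h1 using Nat.le_induction with
    | base =>
      intro _
      simp only [Nat.sub_self, hV0, hV1, Finset.sum_range_one]
      have hp0 := hp 0
      refine ⟨le_refl 1, by nlinarith, by nlinarith [mul_nonneg (mul_nonneg hr.le hp0) (mul_nonneg hr.le hp0)]⟩
    | succ j hj ih =>
      intro hj1N
      obtain ⟨ih1, ih2, ih3⟩ := ih (by omega)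
      have hjN : j ≤ N - 1 := by omega
      have hVj : (1 : ℝ) ≤ V j := le_trans ih1 ih2
      have hVjpos : (0 : ℝ) < V j := by linarith
      have hrecj := hrec j hj hjN
      set q := r * p j / V j with hq
      have hqnn : 0 ≤ q := by
        apply div_nonneg (mul_nonneg hr.le (hp j)) hVjpos.le
      have hqV : V j * q = r * p j := by
        rw [hq]; field_simp [hVjpos.ne']
      have hsum : ∑ i ∈ range (j + 1), p i = (∑ i ∈ range j, p i) + p j :=
        Finset.sum_range_succ p j
      simp only [Nat.add_sub_cancel]
      have hmono : V j ≤ V (j + 1) := by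
        rw [hrecj]; linarith
      refine ⟨hVj, hmono, ?_⟩
      rw [hsum]
      have hVj1 : (1 : ℝ) ≤ V (j + 1) := le_trans hVj hmono
      nlinarith [mul_le_mul_of_nonneg_right hmono hqnn,
        mul_le_mul_of_nonneg_left hmono (sub_nonneg.mpr ih2)]
  obtain ⟨h1, h2, h3⟩ := key N hN le_rfl
  have hVN : (1 : ℝ) ≤ V N := le_trans h1 h2
  have main : V N ^ 2 ≥ 1 + r * ∑ i ∈ range N, p i := by
    nlinarith [mul_le_mul h1 h2 (by linarith) (by linarith : (0:ℝ) ≤ V (N-1))]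
  refine ⟨main, ?_⟩
  intro Δ hΔ hΔ2 hconstr
  have : r * ∑ i ∈ range N, p i ≤ (1 / (1 - Δ)) ^ 2 - 1 := by linarith
  rw [ge_iff_le] at main
  have hr' : 0 < 1 / r := by positivity
  calc ∑ i ∈ range N, p i = (1 / r) * (r * ∑ i ∈ range N, p i) := by
        field_simp
    _ ≤ (1 / r) * ((1 / (1 - Δ)) ^ 2 - 1) := by
        apply mul_le_mul_of_nonneg_left this hr'.le
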